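/- Let p > 1, M > 0, and consider the two-plane function u_0(x) = α x_1^+ − ᾱ x_1^− on B_1 ⊂ ℝⁿ with constants α, ᾱ ≥ 0. Suppose that for every C^1 vector field X with compact support in B_1, the identity ∫_{B_1} (|∇u_0|^p + pM χ_{{u_0>0}}) div X = p ∫_{B_1} |∇u_0|^{p-2} ∇u_0 (∇X) ∇u_0 holds. Then (p−1)(α^p − ᾱ^p) = pM. -/

import Mathlib

open MeasureTheory Metric Set
open scoped RealInnerProductSpace

-- derivative of expNegInvGlue
lemma expNeg_hasDerivAt (x : ℝ) :
    HasDerivAt expNegInvGlue ((x⁻¹) ^ 2 * expNegInvGlue x) x := by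
  have h := expNegInvGlue.hasDerivAt_polynomial_eval_inv_mul 1 x
  simpa using h

noncomputable def myd (t : ℝ) : ℝ := -(((1/2 - t)⁻¹) ^ 2 * expNegInvGlue (1/2 - t))

lemma myρ_hasDerivAt (t : ℝ) :
    HasDerivAt (fun t => expNegInvGlue (1/2 - t)) (myd t) t := by
  have h1 : HasDerivAt (fun t : ℝ => 1/2 - t) (-1) t := by
    simpa using (hasDerivAt_id t).const_sub (1/2 : ℝ)
  have := (expNeg_hasDerivAt (1/2 - t)).comp t h1
  exact this.congr_deriv (by unfold myd; ring)

lemma myd_nonpos (t : ℝ) : myd t ≤ 0 := by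
  have := expNegInvGlue.nonneg (1/2 - t)
  have : 0 ≤ ((1/2 - t)⁻¹) ^ 2 * expNegInvGlue (1/2 - t) := by positivity
  simpa [myd] using this

lemma myd_neg {t : ℝ} (ht : t < 1/2) : myd t < 0 := by
  have h1 : 0 < expNegInvGlue (1/2 - t) := expNegInvGlue.pos_of_pos (by linarith)
  have h2 : 0 < ((1/2 - t)⁻¹) ^ 2 := pow_pos (inv_pos.mpr (by linarith)) 2
  have := mul_pos h2 h1
  simpa [myd] using this

lemma myd_continuous : Continuous myd := by
  have heq : myd = fun t => -(deriv expNegInvGlue (1/2 - t)) := by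
    funext t; rw [(expNeg_hasDerivAt (1/2 - t)).deriv]; rfl
  rw [heq]
  exact (((expNegInvGlue.contDiff (n := 2)).continuous_deriv (by norm_num)).comp
    (by continuity)).neg

noncomputable def myφ {n : ℕ} (x : EuclideanSpace ℝ (Fin (n+1))) : ℝ :=
  expNegInvGlue (1/2 - ‖x‖ ^ 2)

noncomputable def myD {n : ℕ} (x : EuclideanSpace ℝ (Fin (n+1))) : ℝ :=
  myd (‖x‖ ^ 2) * (2 * x 0)

lemma myD_continuous {n : ℕ} : Continuous (myD (n := n)) := by
  apply Continuous.mul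
  · exact myd_continuous.comp (by continuity)
  · exact continuous_const.mul ((continuous_apply (0 : Fin (n+1))).comp (PiLp.continuous_ofLp 2 _) : Continuous fun x : EuclideanSpace ℝ (Fin (n+1)) => x 0)

lemma myφ_hasFDerivAt {n : ℕ} (x : EuclideanSpace ℝ (Fin (n+1))) :
    HasFDerivAt myφ ((myd (‖x‖ ^ 2)) • (2 • (innerSL ℝ x))) x :=
  HasDerivAt.comp_hasFDerivAt (h₂ := fun t => expNegInvGlue (1/2 - t)) x (myρ_hasDerivAt (‖x‖ ^ 2))
    (hasStrictFDerivAt_norm_sq x).hasFDerivAt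

noncomputable def myX {n : ℕ} (x : EuclideanSpace ℝ (Fin (n+1))) : EuclideanSpace ℝ (Fin (n+1)) :=
  myφ x • EuclideanSpace.single 0 1

lemma myX_contDiff {n : ℕ} : ContDiff ℝ 1 (myX (n := n)) :=
  ((expNegInvGlue.contDiff.comp (contDiff_const.sub (contDiff_norm_sq ℝ))).smul
    contDiff_const)

lemma myX_tsupport {n : ℕ} :
    tsupport (myX (n := n)) ⊆ ball (0 : EuclideanSpace ℝ (Fin (n+1))) 1 := by
  have h1 : Function.support (myX (n := n)) ⊆ closedBall 0 (3/4) := by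
    intro x hx
    have hφ : myφ x ≠ 0 := by
      intro h; apply hx; simp [myX, h]
    have : 0 < 1/2 - ‖x‖ ^ 2 := by
      by_contra h
      exact hφ (expNegInvGlue.zero_of_nonpos (by linarith))
    exact mem_closedBall_zero_iff.mpr (by nlinarith [norm_nonneg x])
  refine (closure_minimal h1 isClosed_closedBall).trans ?_
  intro x hx
  simp only [mem_closedBall_zero_iff] at hx
  exact mem_ball_zero_iff.mpr (lt_of_le_of_lt hx (by norm_num))

lemma myX_hasFDerivAt {n : ℕ} (x : EuclideanSpace ℝ (Fin (n+1))) :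
    HasFDerivAt myX (((myd (‖x‖ ^ 2)) • (2 • (innerSL ℝ x))).smulRight
      (EuclideanSpace.single 0 1)) x :=
  (myφ_hasFDerivAt x).smul_const _

lemma myX_div {n : ℕ} (x : EuclideanSpace ℝ (Fin (n+1))) :
    ∑ i : Fin (n+1), fderiv ℝ myX x (EuclideanSpace.single i 1) i = myD x := by
  rw [(myX_hasFDerivAt x).fderiv]
  simp only [ContinuousLinearMap.smulRight_apply, ContinuousLinearMap.smul_apply,
    innerSL_apply_apply, PiLp.smul_apply, smul_eq_mul,
    EuclideanSpace.single_apply, mul_ite, mul_one, mul_zero, Finset.sum_ite_eq,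
    Finset.mem_univ, if_true]
  simp [myD, real_inner_comm, EuclideanSpace.inner_single_left, EuclideanSpace.inner_single_right]

lemma myX_inner {n : ℕ} (x : EuclideanSpace ℝ (Fin (n+1))) (c : ℝ) :
    ⟪fderiv ℝ myX x (c • EuclideanSpace.single 0 1), c • EuclideanSpace.single 0 1⟫
      = c ^ 2 * myD x := by
  rw [(myX_hasFDerivAt x).fderiv]
  simp only [ContinuousLinearMap.smulRight_apply, ContinuousLinearMap.smul_apply,
    innerSL_apply_apply, smul_eq_mul]
  rw [real_inner_smul_left, real_inner_smul_right, real_inner_smul_right]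
  have h1 : ⟪(EuclideanSpace.single 0 1 : EuclideanSpace ℝ (Fin (n+1))),
      EuclideanSpace.single 0 1⟫ = (1 : ℝ) := by
    rw [real_inner_self_eq_norm_sq, EuclideanSpace.norm_single]; norm_num
  have h2 : ⟪x, (EuclideanSpace.single 0 1 : EuclideanSpace ℝ (Fin (n+1)))⟫ = x 0 := by
    rw [real_inner_comm]; simp [EuclideanSpace.inner_single_left]
  rw [h1, h2]
  simp only [myD]
  ring

noncomputable def myR (n : ℕ) : EuclideanSpace ℝ (Fin (n+1)) ≃ₗᵢ[ℝ] EuclideanSpace ℝ (Fin (n+1)) :=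
  LinearIsometryEquiv.piLpCongrRight 2
    (fun i : Fin (n+1) => if i = 0 then LinearIsometryEquiv.neg ℝ (E := ℝ)
      else LinearIsometryEquiv.refl ℝ ℝ)

lemma myR_apply_zero {n : ℕ} (x : EuclideanSpace ℝ (Fin (n+1))) : myR n x 0 = -(x 0) := by
  simp [myR, LinearIsometryEquiv.piLpCongrRight_apply]

lemma myD_comp_myR {n : ℕ} (x : EuclideanSpace ℝ (Fin (n+1))) : myD (myR n x) = -myD x := by
  simp only [myD, (myR n).norm_map, myR_apply_zero]
  ring

lemma myD_integral_zero {n : ℕ} :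
    ∫ x in ball (0 : EuclideanSpace ℝ (Fin (n+1))) 1, myD x = 0 := by
  have hpre : (myR n) ⁻¹' (ball 0 1) = ball 0 1 := by
    ext x
    simp only [mem_preimage, mem_ball_zero_iff, (myR n).norm_map]
  have h := (myR n).measurePreserving.setIntegral_preimage_emb
    (myR n).toHomeomorph.measurableEmbedding myD (ball 0 1)
  rw [hpre] at h
  have h2 : ∫ x in ball (0 : EuclideanSpace ℝ (Fin (n+1))) 1, myD (myR n x)
      = -∫ x in ball (0 : EuclideanSpace ℝ (Fin (n+1))) 1, myD x := by
    rw [← integral_neg]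
    exact integral_congr_ae (Filter.Eventually.of_forall fun x => myD_comp_myR x)
  rw [h2] at h
  linarith

lemma mys_measurable {n : ℕ} :
    MeasurableSet {y : EuclideanSpace ℝ (Fin (n+1)) | 0 < y 0} :=
  measurableSet_lt measurable_const
    (((continuous_apply (0 : Fin (n+1))).comp (PiLp.continuous_ofLp 2 _)).measurable :
      Measurable fun x : EuclideanSpace ℝ (Fin (n+1)) => x 0)

lemma myD_integrableOn {n : ℕ} :
    IntegrableOn (myD (n := n)) (ball (0 : EuclideanSpace ℝ (Fin (n+1))) 1) volume :=
  (myD_continuous.continuousOn.integrableOn_compact (isCompact_closedBall 0 1)).mono_set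
    ball_subset_closedBall

lemma myJ_neg {n : ℕ} :
    ∫ x in ball (0 : EuclideanSpace ℝ (Fin (n+1))) 1,
      Set.indicator {y : EuclideanSpace ℝ (Fin (n+1)) | 0 < y 0} myD x < 0 := by
  set s : Set (EuclideanSpace ℝ (Fin (n+1))) := {y | 0 < y 0} with hs
  have hind : ∀ x, 0 ≤ -(s.indicator myD x) := by
    intro x
    by_cases hx : x ∈ s
    · rw [Set.indicator_of_mem hx]
      have h1 : myd (‖x‖ ^ 2) ≤ 0 := myd_nonpos _
      have h2 : (0:ℝ) ≤ 2 * x 0 := by have := hx; simp only [hs, mem_setOf_eq] at this; linarith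
      have : myD x ≤ 0 := mul_nonpos_iff.mpr (Or.inr ⟨h1, h2⟩)
      linarith
    · rw [Set.indicator_of_notMem hx]; simp
  have hInt : IntegrableOn (fun x => -(s.indicator myD x))
      (ball (0 : EuclideanSpace ℝ (Fin (n+1))) 1) volume :=
    ((myD_integrableOn.indicator mys_measurable)).neg
  have hkey : 0 < ∫ x in ball (0 : EuclideanSpace ℝ (Fin (n+1))) 1,
      -(s.indicator myD x) := by
    rw [setIntegral_pos_iff_support_of_nonneg_ae
      (Filter.Eventually.of_forall hind : _) hInt]
    have hU : IsOpen (s ∩ ball (0 : EuclideanSpace ℝ (Fin (n+1))) (1/2)) :=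
      (isOpen_lt continuous_const
        ((PiLp.proj (𝕜 := ℝ) 2 (fun _ : Fin (n+1) => ℝ) (0 : Fin (n+1))).continuous)).inter
        isOpen_ball
    have hUne : ((1/4 : ℝ) • EuclideanSpace.single 0 1 : EuclideanSpace ℝ (Fin (n+1)))
        ∈ s ∩ ball (0 : EuclideanSpace ℝ (Fin (n+1))) (1/2) := by
      constructor
      · simp only [hs, mem_setOf_eq, PiLp.smul_apply, EuclideanSpace.single_apply,
          if_pos rfl, smul_eq_mul, mul_one]
        norm_num
      · rw [mem_ball_zero_iff, norm_smul, EuclideanSpace.norm_single, norm_one, mul_one]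
        rw [Real.norm_eq_abs, abs_of_nonneg (by norm_num : (0:ℝ) ≤ 1/4)]
        norm_num
    have hsub : s ∩ ball (0 : EuclideanSpace ℝ (Fin (n+1))) (1/2)
        ⊆ Function.support (fun x => -(s.indicator myD x)) ∩ ball 0 1 := by
      rintro x ⟨hxs, hxb⟩
      rw [mem_ball_zero_iff] at hxb
      constructor
      · have hx0 : 0 < x 0 := hxs
        have hnorm : ‖x‖ ^ 2 < 1/2 := by nlinarith [norm_nonneg x]
        have hmy : myD x < 0 := by
          have h1 : myd (‖x‖ ^ 2) < 0 := myd_neg hnorm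
          have h2 : 0 < 2 * x 0 := by linarith
          exact mul_neg_of_neg_of_pos h1 h2
        simp only [Function.mem_support, Set.indicator_of_mem hxs]
        intro h; rw [neg_eq_zero] at h; exact hmy.ne h
      · exact mem_ball_zero_iff.mpr (by linarith)
    calc (0 : ENNReal) < volume (s ∩ ball (0 : EuclideanSpace ℝ (Fin (n+1))) (1/2)) :=
          hU.measure_pos volume ⟨_, hUne⟩
      _ ≤ _ := measure_mono hsub
  rw [integral_neg] at hkey
  linarith

/-- The two-plane function u₀ = α x₁⁺ − ᾱ x₁⁻ has gradient g = α e₁ on {x₁ > 0}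
and g = ᾱ e₁ on {x₁ ≤ 0}. If the weak energy identity
∫ (|∇u₀|^p + pM χ_{u₀>0}) div X = p ∫ |∇u₀|^{p-2} ⟨∇u₀, (∇X)∇u₀⟩
holds for all C¹ vector fields X compactly supported in B₁,
then (p−1)(α^p − ᾱ^p) = pM. -/
theorem stmt7 (n : ℕ) (p M α ᾱ : ℝ) (hp : 1 < p) (hM : 0 < M)
    (hα : 0 ≤ α) (hᾱ : 0 ≤ ᾱ)
    (g : EuclideanSpace ℝ (Fin (n + 1)) → EuclideanSpace ℝ (Fin (n + 1)))
    (hg : ∀ x, g x = if 0 < x 0 then α • EuclideanSpace.single 0 1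
                     else ᾱ • EuclideanSpace.single 0 1)
    (hidentity : ∀ X : EuclideanSpace ℝ (Fin (n + 1)) → EuclideanSpace ℝ (Fin (n + 1)),
        ContDiff ℝ 1 X → tsupport X ⊆ ball (0 : EuclideanSpace ℝ (Fin (n + 1))) 1 →
        ∫ x in ball (0 : EuclideanSpace ℝ (Fin (n + 1))) 1,
            (‖g x‖ ^ p + Set.indicator {y : EuclideanSpace ℝ (Fin (n + 1)) | 0 < y 0}
                (fun _ => p * M) x) *
              (∑ i : Fin (n + 1), fderiv ℝ X x (EuclideanSpace.single i 1) i)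
          = p * ∫ x in ball (0 : EuclideanSpace ℝ (Fin (n + 1))) 1,
              ‖g x‖ ^ (p - 2) * ⟪fderiv ℝ X x (g x), g x⟫) :
    (p - 1) * (α ^ p - ᾱ ^ p) = p * M := by
  classical
  set s : Set (EuclideanSpace ℝ (Fin (n + 1))) := {y | 0 < y 0} with hsdef
  have hX := hidentity myX myX_contDiff myX_tsupport
  have hLHS : ∀ x : EuclideanSpace ℝ (Fin (n + 1)),
      (‖g x‖ ^ p + Set.indicator s (fun _ => p * M) x) *
          (∑ i : Fin (n + 1), fderiv ℝ myX x (EuclideanSpace.single i 1) i)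
        = (ᾱ ^ p * myD x + (α ^ p - ᾱ ^ p) * s.indicator myD x)
            + (p * M) * s.indicator myD x := by
    intro x
    rw [myX_div, hg x]
    by_cases hx : x ∈ s
    · have hx0 : 0 < x 0 := hx
      rw [if_pos hx0, Set.indicator_of_mem hx, Set.indicator_of_mem hx,
        norm_smul, EuclideanSpace.norm_single, norm_one, mul_one,
        Real.norm_eq_abs, abs_of_nonneg hα]
      ring
    · have hx0 : ¬ 0 < x 0 := hx
      rw [if_neg hx0, Set.indicator_of_notMem hx, Set.indicator_of_notMem hx,
        norm_smul, EuclideanSpace.norm_single, norm_one, mul_one,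
        Real.norm_eq_abs, abs_of_nonneg hᾱ]
      ring
  have hRHS : ∀ x : EuclideanSpace ℝ (Fin (n + 1)),
      ‖g x‖ ^ (p - 2) * ⟪fderiv ℝ myX x (g x), g x⟫
        = ᾱ ^ p * myD x + (α ^ p - ᾱ ^ p) * s.indicator myD x := by
    intro x
    have key : ∀ c : ℝ, 0 ≤ c → c ^ (p - 2) * (c ^ 2 * myD x) = c ^ p * myD x := by
      intro c hc
      rcases eq_or_lt_of_le hc with h | h
      · rw [← h]
        have hp0 : (0:ℝ) ^ p = 0 := Real.zero_rpow (ne_of_gt (by linarith : (0:ℝ) < p))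
        simp [hp0]
      · have hcc : c ^ (p - 2) * c ^ (2:ℕ) = c ^ p := by
          rw [← Real.rpow_natCast c 2, ← Real.rpow_add h]
          norm_num
        calc c ^ (p - 2) * (c ^ 2 * myD x) = (c ^ (p - 2) * c ^ 2) * myD x := by ring
          _ = c ^ p * myD x := by rw [hcc]
    rw [hg x]
    by_cases hx : x ∈ s
    · have hx0 : 0 < x 0 := hx
      rw [if_pos hx0, myX_inner, Set.indicator_of_mem hx,
        norm_smul, EuclideanSpace.norm_single, norm_one, mul_one,
        Real.norm_eq_abs, abs_of_nonneg hα, key α hα]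
      ring
    · have hx0 : ¬ 0 < x 0 := hx
      rw [if_neg hx0, myX_inner, Set.indicator_of_notMem hx,
        norm_smul, EuclideanSpace.norm_single, norm_one, mul_one,
        Real.norm_eq_abs, abs_of_nonneg hᾱ, key ᾱ hᾱ]
      ring
  rw [integral_congr_ae (Filter.Eventually.of_forall hLHS),
    integral_congr_ae (Filter.Eventually.of_forall hRHS)] at hX
  have hDint := myD_integrableOn (n := n)
  have hχ : IntegrableOn (s.indicator myD)
      (ball (0 : EuclideanSpace ℝ (Fin (n + 1))) 1) volume :=
    hDint.indicator mys_measurable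
  set J := ∫ x in ball (0 : EuclideanSpace ℝ (Fin (n + 1))) 1, s.indicator myD x with hJdef
  have hAint : Integrable (fun x => ᾱ ^ p * myD x + (α ^ p - ᾱ ^ p) * s.indicator myD x)
      (volume.restrict (ball (0 : EuclideanSpace ℝ (Fin (n + 1))) 1)) :=
    (hDint.const_mul _).add (hχ.const_mul _)
  have hA : (∫ x in ball (0 : EuclideanSpace ℝ (Fin (n + 1))) 1,
      (ᾱ ^ p * myD x + (α ^ p - ᾱ ^ p) * s.indicator myD x))
      = (α ^ p - ᾱ ^ p) * J := by
    rw [integral_add (hDint.const_mul _) (hχ.const_mul _), integral_const_mul,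
      integral_const_mul, myD_integral_zero]
    ring
  rw [integral_add hAint (hχ.const_mul _), integral_const_mul, hA, ← hJdef] at hX
  have hJneg : J < 0 := myJ_neg
  have hfac : (p * M - (p - 1) * (α ^ p - ᾱ ^ p)) * J = 0 := by linarith [hX]
  rcases mul_eq_zero.mp hfac with h | h
  · linarith
  · exact absurd h hJneg.ne
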